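/- Let K' be a field with a valuation v' taking values in a linearly ordered commutative group with zero, with valuation ring O' = {x : v'(x) ≤ 1}. Let K ⊆ K' be a subfield and k ⊆ K a subfield with k ⊆ O', such that k lifts the residue field of K, i.e. for every u ∈ K with v'(u) = 1 there exists α ∈ k with v'(u − α) < 1. Let k' ⊆ K' be a subfield with k ⊆ k' ⊆ O'. Suppose a₁, …, aₙ ∈ K are k-linearly independent over O' ∩ K, meaning: whenever c₁, …, cₙ ∈ k and c₁a₁ + ⋯ + cₙaₙ ∈ O', all cᵢ = 0. Then a₁, …, aₙ are k'-linearly independent over O', i.e. whenever β₁', …, βₙ' ∈ k' and β₁'a₁ + ⋯ + βₙ'aₙ ∈ O', all βᵢ' = 0. -/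

import Mathlib

/-- if a₁,…,aₙ ∈ K are k-linearly independent over O' ∩ K, then they are
    k'-linearly independent over O'. -/
theorem stmt_1 {K' : Type*} [Field K'] {Γ₀ : Type*} [LinearOrderedCommGroupWithZero Γ₀]
    (v' : Valuation K' Γ₀) (K k k' : Subfield K')
    (hkK : k ≤ K) (hkO : ∀ x ∈ k, v' x ≤ 1)
    (hlift : ∀ u ∈ K, v' u = 1 → ∃ α ∈ k, v' (u - α) < 1)
    (hkk' : k ≤ k') (hk'O : ∀ x ∈ k', v' x ≤ 1)
    (n : ℕ) (a : Fin n → K') (ha : ∀ i, a i ∈ K)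
    (hindep : ∀ c : Fin n → K', (∀ i, c i ∈ k) → v' (∑ i, c i * a i) ≤ 1 → ∀ i, c i = 0) :
    ∀ β : Fin n → K', (∀ i, β i ∈ k') → v' (∑ i, β i * a i) ≤ 1 → ∀ i, β i = 0 := by
  -- nonzero elements of k' have valuation exactly 1
  have hk'unit : ∀ x ∈ k', v' x < 1 → x = 0 := by
    intro x hx hlt
    by_contra hx0
    have h1 : v' x * v' x⁻¹ = 1 := by
      rw [← map_mul, mul_inv_cancel₀ hx0, map_one]
    have h2 : v' x * v' x⁻¹ ≤ v' x * 1 :=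
      mul_le_mul_right (hk'O _ (k'.inv_mem hx)) _
    rw [h1, mul_one] at h2
    exact absurd (lt_of_le_of_lt h2 hlt) (lt_irrefl _)
  induction n with
  | zero => exact fun β _ _ i => i.elim0
  | succ n ih =>
    intro β hβ hs
    -- choose j maximizing v' (a j)
    obtain ⟨j, hj⟩ := Finite.exists_max fun i => v' (a i)
    set M := v' (a j) with hMdef
    -- 1 < M
    have hM1 : 1 < M := by
      by_contra h
      push_neg at h
      have h0 := hindep (fun i => if i = j then 1 else 0)
        (fun i => by by_cases hij : i = j <;> simp [hij, k.one_mem, k.zero_mem])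
        (by
          have : ∑ i, (if i = j then (1:K') else 0) * a i = a j := by
            rw [Finset.sum_eq_single j] <;> simp +contextual
          rwa [this]) j
      simp at h0
    have hM0 : M ≠ 0 := by
      intro h; rw [h] at hM1; exact absurd hM1 (by simp)
    have haj : a j ≠ 0 := by
      intro h; apply hM0; rw [hMdef, h, map_zero]
    -- choose lifts
    have hα : ∀ i : Fin n, ∃ α, α ∈ k ∧ v' (a (j.succAbove i) - α * a j) < M := by
      intro i
      by_cases h : v' (a (j.succAbove i)) = M
      · obtain ⟨α, hαk, hαlt⟩ := hlift (a (j.succAbove i) / a j)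
          (K.div_mem (ha _) (ha j)) (by rw [map_div₀, h, div_self hM0])
        refine ⟨α, hαk, ?_⟩
        have e : a (j.succAbove i) - α * a j = (a (j.succAbove i) / a j - α) * a j := by
          rw [sub_mul, div_mul_cancel₀ _ haj]
        rw [e, map_mul, mul_comm]
        simpa using mul_lt_mul_of_pos_left hαlt (zero_lt_iff.mpr hM0)
      · exact ⟨0, k.zero_mem, by simpa using lt_of_le_of_ne (hj (j.succAbove i)) h⟩
    choose α hαk hαlt using hα
    set b : Fin n → K' := fun i => a (j.succAbove i) - α i * a j with hbdef
    have hb_mem : ∀ i, b i ∈ K := fun i =>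
      K.sub_mem (ha _) (K.mul_mem (hkK (hαk i)) (ha j))
    -- the new family is k-independent over O'
    have hbindep : ∀ c : Fin n → K', (∀ i, c i ∈ k) → v' (∑ i, c i * b i) ≤ 1 →
        ∀ i, c i = 0 := by
      intro c hc hcv i
      set c' : Fin (n+1) → K' := j.insertNth (-∑ i, c i * α i) c with hc'def
      have hsum : ∑ i', c' i' * a i' = ∑ i, c i * b i := by
        rw [Fin.sum_univ_succAbove _ j]
        simp only [hc'def, Fin.insertNth_apply_same, Fin.insertNth_apply_succAbove, hbdef,
          mul_sub, Finset.sum_sub_distrib, ← mul_assoc, ← Finset.sum_mul]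
        ring
      have h0 := hindep c'
        (by
          intro i'
          rcases eq_or_ne i' j with rfl | hne
          · simp only [hc'def, Fin.insertNth_apply_same]
            exact k.neg_mem (k.sum_mem fun i _ => k.mul_mem (hc i) (hαk i))
          · obtain ⟨i₀, rfl⟩ := Fin.exists_succAbove_eq hne
            simp only [hc'def, Fin.insertNth_apply_succAbove]
            exact hc i₀)
        (by rwa [hsum])
      have := h0 (j.succAbove i)
      simpa [hc'def, Fin.insertNth_apply_succAbove] using this
    -- decompose the original sum
    set γ : K' := β j + ∑ i, β (j.succAbove i) * α i with hγdef
    have key : ∑ i', β i' * a i' = (∑ i, β (j.succAbove i) * b i) + γ * a j := by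
      rw [Fin.sum_univ_succAbove _ j]
      simp only [hbdef, hγdef, mul_sub, add_mul, Finset.sum_sub_distrib, ← mul_assoc,
        ← Finset.sum_mul]
      ring
    have hγk' : γ ∈ k' :=
      k'.add_mem (hβ j) (k'.sum_mem fun i _ => k'.mul_mem (hβ _) (hkk' (hαk i)))
    -- the rest-sum has valuation < M
    have hrest : v' (∑ i, β (j.succAbove i) * b i) < M := by
      refine v'.map_sum_lt hM0 fun i _ => ?_
      rw [map_mul]
      calc v' (β (j.succAbove i)) * v' (b i) ≤ 1 * v' (b i) :=
            mul_le_mul_left (hk'O _ (hβ _)) _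
        _ = v' (b i) := one_mul _
        _ < M := hαlt i
    have hγa : v' (γ * a j) < M := by
      have e : γ * a j = (∑ i', β i' * a i') - ∑ i, β (j.succAbove i) * b i := by
        rw [key]; ring
      rw [e]
      exact lt_of_le_of_lt (v'.map_sub _ _) (max_lt (lt_of_le_of_lt hs hM1) hrest)
    have hγlt : v' γ < 1 := by
      by_contra h
      push_neg at h
      have : M ≤ v' γ * M := le_mul_of_one_le_left' h
      rw [map_mul] at hγa
      exact absurd (lt_of_le_of_lt this hγa) (lt_irrefl _)
    have hγ0 : γ = 0 := hk'unit γ hγk' hγlt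
    -- apply the induction hypothesis
    have hrv : v' (∑ i, β (j.succAbove i) * b i) ≤ 1 := by
      have : ∑ i, β (j.succAbove i) * b i = ∑ i', β i' * a i' := by
        rw [key, hγ0, zero_mul, add_zero]
      rw [this]; exact hs
    have hz : ∀ i, β (j.succAbove i) = 0 :=
      ih b hb_mem hbindep (fun i => β (j.succAbove i)) (fun i => hβ _) hrv
    -- conclude
    have hβj : β j = 0 := by
      have hsum0 : ∑ i, β (j.succAbove i) * α i = 0 :=
        Finset.sum_eq_zero fun i _ => by rw [hz i, zero_mul]
      rw [hγdef, hsum0, add_zero] at hγ0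
      exact hγ0
    intro i
    rcases eq_or_ne i j with rfl | hne
    · exact hβj
    · obtain ⟨i₀, rfl⟩ := Fin.exists_succAbove_eq hne
      exact hz i₀
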